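/- Let G be a closed subgroup of S∞. Then the sets 𝓕 = {g ∈ G : the set {a ∈ ℕ : the orbit of a under g is finite} is finite} and 𝓒 = {g ∈ G : for every finite set F ⊆ ℕ and every x ∈ ℕ, if the orbit of x under the pointwise stabilizer G_(F) is infinite, then it is not contained in the union of finitely many orbits of g} are both Borel subsets of G and both invariant under conjugacy in G (i.e., g·X·g⁻¹ = X for every g ∈ G, where X is 𝓕 or 𝓒). -/

import Mathlib

open MeasureTheory

/-- The topology of pointwise convergence on `S∞ = Equiv.Perm V` (`V` discrete): the topology
induced by the embedding `σ ↦ (σ, σ⁻¹)` into `(V → V) × (V → V)`. -/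
instance instPermTop {V : Type*} [TopologicalSpace V] : TopologicalSpace (Equiv.Perm V) :=
  TopologicalSpace.induced (fun σ : Equiv.Perm V => ((⇑σ, ⇑σ⁻¹) : (V → V) × (V → V)))
    inferInstance

noncomputable instance instPermMeas {V : Type*} [TopologicalSpace V] :
    MeasurableSpace (Equiv.Perm V) := borel _

instance instPermBorel {V : Type*} [TopologicalSpace V] : BorelSpace (Equiv.Perm V) := ⟨rfl⟩

/-- A set `A` in a topological group is *Haar null* if there are a Borel set `B ⊇ A` and a
Borel probability measure `μ` such that `μ (g • B • h) = 0` for all `g, h`. -/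
def HaarNull {G : Type*} [Group G] [MeasurableSpace G] (A : Set G) : Prop :=
  ∃ B : Set G, A ⊆ B ∧ MeasurableSet B ∧
    ∃ μ : Measure G, IsProbabilityMeasure μ ∧
      ∀ g h : G, μ ((fun b => g * b * h) '' B) = 0

/-- The orbit `{gᵏ(a) : k ∈ ℤ}` of a point `a` under a permutation `g`. -/
def orbitZ {α : Type*} (g : Equiv.Perm α) (a : α) : Set α :=
  {b | ∃ k : ℤ, (g ^ k) a = b}

/-- The group-theoretic algebraic closure of `S ⊆ ℕ` with respect to a subgroup `G ≤ S∞`: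
the set of points whose orbit under the pointwise stabilizer `G_(S)` is finite. -/
def ACL (G : Subgroup (Equiv.Perm ℕ)) (S : Set ℕ) : Set ℕ :=
  {x | {y | ∃ g ∈ G, (∀ s ∈ S, g s = s) ∧ g x = y}.Finite}

/-- The orbit of `x` under the pointwise stabilizer `G_(F)`. -/
def stabOrbit (G : Subgroup (Equiv.Perm ℕ)) (F : Set ℕ) (x : ℕ) : Set ℕ :=
  {y | ∃ g ∈ G, (∀ s ∈ F, g s = s) ∧ g x = y}

open Set

lemma meas_apply (a : ℕ) : Measurable fun g : Equiv.Perm ℕ => g a := by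
  have h1 : Continuous fun g : Equiv.Perm ℕ => ((⇑g, ⇑g⁻¹) : (ℕ → ℕ) × (ℕ → ℕ)) :=
    continuous_induced_dom
  exact ((continuous_apply a).comp (continuous_fst.comp h1)).measurable

lemma meas_pow (n : ℕ) (a : ℕ) : Measurable fun g : Equiv.Perm ℕ => (g ^ n) a := by
  induction n generalizing a with
  | zero => simpa using measurable_const
  | succ n ih =>
    have key : ∀ g : Equiv.Perm ℕ, (g ^ (n + 1)) a = (g ^ n) (g a) := by
      intro g; rw [pow_succ]; rfl
    simp only [key]
    apply measurable_to_countable'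
    intro b
    have : (fun g : Equiv.Perm ℕ => (g ^ n) (g a)) ⁻¹' {b}
        = ⋃ c : ℕ, {g : Equiv.Perm ℕ | g a = c} ∩ {g : Equiv.Perm ℕ | (g ^ n) c = b} := by
      ext g
      simp only [mem_preimage, mem_singleton_iff, mem_iUnion, mem_inter_iff, mem_setOf_eq]
      constructor
      · intro h; exact ⟨g a, rfl, h⟩
      · rintro ⟨c, rfl, h⟩; exact h
    rw [this]
    exact MeasurableSet.iUnion fun c =>
      ((meas_apply a) (measurableSet_singleton c)).inter ((ih c) (measurableSet_singleton b))

lemma orbitZ_mem_iff (g : Equiv.Perm ℕ) (a y : ℕ) :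
    y ∈ orbitZ g a ↔ ∃ n : ℕ, (g ^ n) a = y ∨ (g ^ n) y = a := by
  constructor
  · rintro ⟨k, rfl⟩
    rcases k with n | n
    · exact ⟨n, Or.inl (by rw [Int.ofNat_eq_coe, zpow_natCast])⟩
    · refine ⟨n + 1, Or.inr ?_⟩
      have hp : (g ^ (n + 1) : Equiv.Perm ℕ) * g ^ (Int.negSucc n) = 1 := by
        rw [← zpow_natCast g (n + 1), ← zpow_add, Int.negSucc_eq,
          show ((n + 1 : ℕ) : ℤ) + -((n : ℤ) + 1) = 0 by push_cast; ring, zpow_zero]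
      calc (g ^ (n + 1)) ((g ^ (Int.negSucc n)) a)
          = ((g ^ (n + 1) : Equiv.Perm ℕ) * g ^ (Int.negSucc n)) a := rfl
        _ = a := by rw [hp]; rfl
  · rintro ⟨n, h | h⟩
    · exact ⟨(n : ℤ), by rwa [zpow_natCast]⟩
    · refine ⟨-(n : ℤ), ?_⟩
      have hp : (g ^ (-(n : ℤ)) : Equiv.Perm ℕ) * g ^ (n : ℕ) = 1 := by
        rw [← zpow_natCast g n, ← zpow_add]; simp
      calc (g ^ (-(n : ℤ))) a = (g ^ (-(n : ℤ))) ((g ^ n) y) := by rw [h]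
        _ = ((g ^ (-(n : ℤ)) : Equiv.Perm ℕ) * g ^ (n : ℕ)) y := rfl
        _ = y := by rw [hp]; rfl

lemma orbitZ_finite_iff (g : Equiv.Perm ℕ) (a : ℕ) :
    (orbitZ g a).Finite ↔ ∃ n : ℕ, (g ^ (n + 1)) a = a := by
  constructor
  · intro hfin
    by_contra hc
    push_neg at hc
    have hinj : Function.Injective fun n : ℕ => (g ^ n) a := by
      intro i j hij
      by_contra hne
      rcases Nat.lt_or_ge i j with hlt | hge
      · have : (g ^ i) ((g ^ (j - i)) a) = (g ^ i) a := by
          rw [← Equiv.Perm.mul_apply, ← pow_add, Nat.add_sub_cancel' hlt.le]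
          exact hij.symm
        have h2 : (g ^ (j - i)) a = a := (g ^ i).injective this
        obtain ⟨m, hm⟩ : ∃ m, j - i = m + 1 :=
          ⟨j - i - 1, by omega⟩
        exact hc m (by rw [← hm]; exact h2)
      · have hlt : j < i := by omega
        have : (g ^ j) ((g ^ (i - j)) a) = (g ^ j) a := by
          rw [← Equiv.Perm.mul_apply, ← pow_add, Nat.add_sub_cancel' hlt.le]
          exact hij
        have h2 : (g ^ (i - j)) a = a := (g ^ j).injective this
        obtain ⟨m, hm⟩ : ∃ m, i - j = m + 1 := ⟨i - j - 1, by omega⟩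
        exact hc m (by rw [← hm]; exact h2)
    exact Set.infinite_of_injective_forall_mem hinj
      (fun n => show (g ^ n) a ∈ orbitZ g a from ⟨(n : ℤ), by rw [zpow_natCast]⟩) hfin
  · rintro ⟨n, hn⟩
    apply Set.Finite.subset ((Set.finite_Iio (n + 1)).image fun m => (g ^ m) a)
    rintro _ ⟨k, rfl⟩
    set p : ℤ := (n : ℤ) + 1 with hp
    have hppos : 0 < p := by positivity
    have hmod : (g ^ (k % p)) a = (g ^ k) a := by
      have hfix : (g ^ (p * (k / p))) a = a := by
        rw [zpow_mul]
        have : (g ^ p) a = a := by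
          rw [hp, show ((n : ℤ) + 1) = ((n + 1 : ℕ) : ℤ) by push_cast; ring, zpow_natCast]
          exact hn
        exact Equiv.Perm.zpow_apply_eq_self_of_apply_eq_self this _
      calc (g ^ (k % p)) a = (g ^ (k % p)) ((g ^ (p * (k / p))) a) := by rw [hfix]
        _ = (g ^ (k % p + p * (k / p))) a := by rw [zpow_add]; rfl
        _ = (g ^ k) a := by rw [Int.emod_add_mul_ediv]
    refine ⟨(k % p).toNat, ?_, ?_⟩
    · have h1 : k % p < p := Int.emod_lt_of_pos k hppos
      simp only [mem_Iio]
      omega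
    · show (g ^ (k % p).toNat) a = (g ^ k) a
      rw [← hmod, ← zpow_natCast g (k % p).toNat,
        Int.toNat_of_nonneg (Int.emod_nonneg k (by omega))]
lemma F_meas : MeasurableSet {σ : Equiv.Perm ℕ | {a : ℕ | (orbitZ σ a).Finite}.Finite} := by
  have heq : {σ : Equiv.Perm ℕ | {a : ℕ | (orbitZ σ a).Finite}.Finite}
      = ⋃ N : ℕ, ⋂ a : ℕ, ⋂ n : ℕ, {σ : Equiv.Perm ℕ | (σ ^ (n + 1)) a = a → a < N} := by
    ext σ
    simp only [mem_setOf_eq, mem_iUnion, mem_iInter, mem_setOf_eq]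
    constructor
    · intro h
      obtain ⟨N, hN⟩ := h.bddAbove
      refine ⟨N + 1, fun a n hn => ?_⟩
      have ha : a ∈ {a : ℕ | (orbitZ σ a).Finite} := (orbitZ_finite_iff σ a).2 ⟨n, hn⟩
      have := hN ha
      omega
    · rintro ⟨N, hN⟩
      apply Set.Finite.subset (Set.finite_Iio N)
      intro a ha
      obtain ⟨n, hn⟩ := (orbitZ_finite_iff σ a).1 ha
      exact hN a n hn
  rw [heq]
  apply MeasurableSet.iUnion; intro N
  apply MeasurableSet.iInter; intro a
  apply MeasurableSet.iInter; intro n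
  by_cases h : a < N
  · have : {σ : Equiv.Perm ℕ | (σ ^ (n + 1)) a = a → a < N} = univ := by
      ext σ; simp [h]
    rw [this]; exact MeasurableSet.univ
  · have : {σ : Equiv.Perm ℕ | (σ ^ (n + 1)) a = a → a < N}
        = {σ : Equiv.Perm ℕ | (σ ^ (n + 1)) a = a}ᶜ := by
      ext σ; simp [h]
    rw [this]
    exact ((meas_pow (n + 1) a) (measurableSet_singleton a)).compl

lemma C_meas (G : Subgroup (Equiv.Perm ℕ)) :
    MeasurableSet {σ : Equiv.Perm ℕ | ∀ F : Set ℕ, F.Finite → ∀ x : ℕ,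
      (stabOrbit G F x).Infinite →
      ¬ ∃ T : Finset ℕ, stabOrbit G F x ⊆ ⋃ a ∈ T, orbitZ σ a} := by
  have heq : {σ : Equiv.Perm ℕ | ∀ F : Set ℕ, F.Finite → ∀ x : ℕ, (stabOrbit G F x).Infinite →
      ¬ ∃ T : Finset ℕ, stabOrbit G F x ⊆ ⋃ a ∈ T, orbitZ σ a}
      = ⋂ (F : Finset ℕ) (x : ℕ) (T : Finset ℕ),
        {σ : Equiv.Perm ℕ | (stabOrbit G ↑F x).Infinite →
          ¬ stabOrbit G ↑F x ⊆ ⋃ a ∈ T, orbitZ σ a} := by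
    ext σ
    simp only [mem_setOf_eq, mem_iInter]
    constructor
    · intro h F x T hinf hsub
      exact h ↑F F.finite_toSet x hinf ⟨T, hsub⟩
    · rintro h F hF x hinf ⟨T, hsub⟩
      have hcoe : (↑hF.toFinset : Set ℕ) = F := hF.coe_toFinset
      exact h hF.toFinset x T (by rw [hcoe]; exact hinf) (by rw [hcoe]; exact hsub)
  rw [heq]
  refine MeasurableSet.iInter fun F => MeasurableSet.iInter fun x =>
    MeasurableSet.iInter fun T => ?_
  by_cases hinf : (stabOrbit G ↑F x).Infinite
  · have hrw : {σ : Equiv.Perm ℕ | (stabOrbit G ↑F x).Infinite →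
        ¬ stabOrbit G ↑F x ⊆ ⋃ a ∈ T, orbitZ σ a}
        = ⋃ y ∈ stabOrbit G ↑F x, ⋂ a ∈ T, {σ : Equiv.Perm ℕ | y ∉ orbitZ σ a} := by
      ext σ
      simp only [mem_setOf_eq, mem_iUnion, mem_iInter, Set.not_subset, exists_prop]
      constructor
      · intro h
        obtain ⟨y, hy, hyn⟩ := h hinf
        exact ⟨y, hy, fun a ha hmem => hyn ⟨a, ha, hmem⟩⟩
      · rintro ⟨y, hy, hya⟩ _
        refine ⟨y, hy, fun hmem => ?_⟩
        obtain ⟨a, ha, hmem⟩ := hmem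
        exact hya a ha hmem
    rw [hrw]
    refine MeasurableSet.biUnion (Set.to_countable _) fun y _ =>
      MeasurableSet.biInter (T.countable_toSet) fun a _ => ?_
    have hrw2 : {σ : Equiv.Perm ℕ | y ∉ orbitZ σ a}
        = (⋃ n : ℕ, ({σ : Equiv.Perm ℕ | (σ ^ n) a = y}
            ∪ {σ : Equiv.Perm ℕ | (σ ^ n) y = a}))ᶜ := by
      ext σ
      simp only [mem_setOf_eq, mem_compl_iff, mem_iUnion, mem_union]
      rw [orbitZ_mem_iff]
    rw [hrw2]
    exact (MeasurableSet.iUnion fun n =>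
      ((meas_pow n a) (measurableSet_singleton y)).union
        ((meas_pow n y) (measurableSet_singleton a))).compl
  · have : {σ : Equiv.Perm ℕ | (stabOrbit G ↑F x).Infinite →
        ¬ stabOrbit G ↑F x ⊆ ⋃ a ∈ T, orbitZ σ a} = univ := by
      ext σ
      simp only [mem_setOf_eq, mem_univ, iff_true]
      intro h; exact absurd h hinf
    rw [this]; exact MeasurableSet.univ

lemma orbitZ_conj (h g : Equiv.Perm ℕ) (a : ℕ) :
    orbitZ (h * g * h⁻¹) a = ⇑h '' orbitZ g (h⁻¹ a) := by
  ext y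
  simp only [orbitZ, mem_setOf_eq, mem_image]
  constructor
  · rintro ⟨k, rfl⟩
    refine ⟨(g ^ k) (h⁻¹ a), ⟨k, rfl⟩, ?_⟩
    rw [conj_zpow]
    rfl
  · rintro ⟨z, ⟨k, rfl⟩, rfl⟩
    exact ⟨k, by rw [conj_zpow]; rfl⟩

lemma stab_conj_subset (G : Subgroup (Equiv.Perm ℕ)) {h : Equiv.Perm ℕ} (hh : h ∈ G)
    (F : Set ℕ) (x : ℕ) :
    ⇑h '' stabOrbit G F x ⊆ stabOrbit G (⇑h '' F) (h x) := by
  rintro _ ⟨y, ⟨k, hk, hfix, hkx⟩, rfl⟩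
  refine ⟨h * k * h⁻¹, mul_mem (mul_mem hh hk) (inv_mem hh), ?_, ?_⟩
  · rintro _ ⟨s, hs, rfl⟩
    simp only [Equiv.Perm.mul_apply, Equiv.Perm.coe_inv, Equiv.symm_apply_apply]
    rw [hfix s hs]
  · simp only [Equiv.Perm.mul_apply, Equiv.Perm.coe_inv, Equiv.symm_apply_apply]
    rw [hkx]

lemma stab_conj_eq (G : Subgroup (Equiv.Perm ℕ)) {h : Equiv.Perm ℕ} (hh : h ∈ G)
    (F : Set ℕ) (x : ℕ) :
    ⇑h '' stabOrbit G F x = stabOrbit G (⇑h '' F) (h x) := by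
  apply Set.Subset.antisymm (stab_conj_subset G hh F x)
  intro y hy
  have h2 := stab_conj_subset G (inv_mem hh) (⇑h '' F) (h x) (Set.mem_image_of_mem _ hy)
  have e1 : ⇑h⁻¹ '' (⇑h '' F) = F := by
    ext s
    simp only [Set.mem_image]
    constructor
    · rintro ⟨_, ⟨t, ht, rfl⟩, rfl⟩
      rwa [Equiv.Perm.coe_inv, Equiv.symm_apply_apply]
    · intro hs
      exact ⟨h s, ⟨s, hs, rfl⟩, Equiv.symm_apply_apply h s⟩
  have e2 : h⁻¹ (h x) = x := Equiv.symm_apply_apply h x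
  rw [e1, e2] at h2
  exact ⟨h⁻¹ y, h2, Equiv.apply_symm_apply h y⟩

lemma conj_image_eq {H : Type*} [Group H] (X : Set H)
    (hX : ∀ g : H, g ∈ X → ∀ h : H, h * g * h⁻¹ ∈ X) (h : H) :
    (fun x => h * x * h⁻¹) '' X = X := by
  apply Set.Subset.antisymm
  · rintro _ ⟨g, hg, rfl⟩; exact hX g hg h
  · intro g hg
    refine ⟨h⁻¹ * g * h, by simpa using hX g hg h⁻¹, ?_⟩
    show h * (h⁻¹ * g * h) * h⁻¹ = g
    group

lemma F_conj_mem (G : Subgroup (Equiv.Perm ℕ)) (g : G)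
    (hg : {a : ℕ | (orbitZ (g : Equiv.Perm ℕ) a).Finite}.Finite) (h : G) :
    {a : ℕ | (orbitZ ((h * g * h⁻¹ : G) : Equiv.Perm ℕ) a).Finite}.Finite := by
  have hc : ((h * g * h⁻¹ : G) : Equiv.Perm ℕ)
      = (h : Equiv.Perm ℕ) * (g : Equiv.Perm ℕ) * (h : Equiv.Perm ℕ)⁻¹ := rfl
  have heq : {a : ℕ | (orbitZ ((h * g * h⁻¹ : G) : Equiv.Perm ℕ) a).Finite}
      = ⇑(h : Equiv.Perm ℕ) '' {a : ℕ | (orbitZ (g : Equiv.Perm ℕ) a).Finite} := by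
    ext a
    rw [mem_setOf_eq, hc, orbitZ_conj]
    constructor
    · intro hfin
      have hfin2 : (orbitZ (g : Equiv.Perm ℕ) ((h : Equiv.Perm ℕ)⁻¹ a)).Finite :=
        hfin.of_finite_image (Set.injOn_of_injective (h : Equiv.Perm ℕ).injective)
      exact ⟨(h : Equiv.Perm ℕ)⁻¹ a, hfin2, Equiv.apply_symm_apply (h : Equiv.Perm ℕ) a⟩
    · rintro ⟨b, hb, rfl⟩
      have : (h : Equiv.Perm ℕ)⁻¹ ((h : Equiv.Perm ℕ) b) = b :=
        Equiv.symm_apply_apply (h : Equiv.Perm ℕ) b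
      rw [this]
      exact hb.image _
  rw [heq]
  exact hg.image _

lemma C_conj_mem (G : Subgroup (Equiv.Perm ℕ)) (g : G)
    (hg : ∀ F : Set ℕ, F.Finite → ∀ x : ℕ, (stabOrbit G F x).Infinite →
      ¬ ∃ T : Finset ℕ, stabOrbit G F x ⊆ ⋃ a ∈ T, orbitZ (g : Equiv.Perm ℕ) a) (h : G) :
    ∀ F : Set ℕ, F.Finite → ∀ x : ℕ, (stabOrbit G F x).Infinite →
      ¬ ∃ T : Finset ℕ, stabOrbit G F x ⊆ ⋃ a ∈ T,
        orbitZ ((h * g * h⁻¹ : G) : Equiv.Perm ℕ) a := by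
  intro F hF x hinf hex
  obtain ⟨T, hsub⟩ := hex
  set h₀ : Equiv.Perm ℕ := (h : Equiv.Perm ℕ) with hh₀
  have hmem : h₀⁻¹ ∈ G := inv_mem h.2
  have hstab : ⇑h₀⁻¹ '' stabOrbit G F x = stabOrbit G (⇑h₀⁻¹ '' F) (h₀⁻¹ x) :=
    stab_conj_eq G hmem F x
  refine hg (⇑h₀⁻¹ '' F) (hF.image _) (h₀⁻¹ x) ?_ ⟨T.image fun a => h₀⁻¹ a, ?_⟩
  · rw [← hstab]
    exact hinf.image (Set.injOn_of_injective h₀⁻¹.injective)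
  · rw [← hstab]
    rintro _ ⟨z, hz, rfl⟩
    have hz2 := hsub hz
    simp only [mem_iUnion, exists_prop] at hz2
    obtain ⟨a, ha, hmemz⟩ := hz2
    have hc : ((h * g * h⁻¹ : G) : Equiv.Perm ℕ) = h₀ * (g : Equiv.Perm ℕ) * h₀⁻¹ := rfl
    rw [hc, orbitZ_conj] at hmemz
    obtain ⟨w, hw, hwz⟩ := hmemz
    have hzw : h₀⁻¹ z = w := by rw [← hwz]; exact Equiv.symm_apply_apply h₀ w
    simp only [mem_iUnion, exists_prop]
    exact ⟨h₀⁻¹ a, Finset.mem_image_of_mem _ ha, by rw [hzw]; exact hw⟩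

/-- For a closed subgroup `G ≤ S∞`, the sets `𝓕` (finitely many finite orbits) and `𝓒` (no
infinite orbit of a pointwise stabilizer is covered by finitely many orbits) are Borel and
conjugacy invariant. -/
theorem stmt_7 (G : Subgroup (Equiv.Perm ℕ)) (hG : IsClosed (G : Set (Equiv.Perm ℕ))) :
    MeasurableSet {g : G | {a : ℕ | (orbitZ (g : Equiv.Perm ℕ) a).Finite}.Finite} ∧
    MeasurableSet {g : G | ∀ F : Set ℕ, F.Finite → ∀ x : ℕ, (stabOrbit G F x).Infinite →
      ¬ ∃ T : Finset ℕ, stabOrbit G F x ⊆ ⋃ a ∈ T, orbitZ (g : Equiv.Perm ℕ) a} ∧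
    (∀ h : G, (fun x => h * x * h⁻¹) ''
        {g : G | {a : ℕ | (orbitZ (g : Equiv.Perm ℕ) a).Finite}.Finite} =
      {g : G | {a : ℕ | (orbitZ (g : Equiv.Perm ℕ) a).Finite}.Finite}) ∧
    (∀ h : G, (fun x => h * x * h⁻¹) ''
        {g : G | ∀ F : Set ℕ, F.Finite → ∀ x : ℕ, (stabOrbit G F x).Infinite →
          ¬ ∃ T : Finset ℕ, stabOrbit G F x ⊆ ⋃ a ∈ T, orbitZ (g : Equiv.Perm ℕ) a} =
      {g : G | ∀ F : Set ℕ, F.Finite → ∀ x : ℕ, (stabOrbit G F x).Infinite →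
        ¬ ∃ T : Finset ℕ, stabOrbit G F x ⊆ ⋃ a ∈ T, orbitZ (g : Equiv.Perm ℕ) a}) := by
  have hval : Measurable (Subtype.val : G → Equiv.Perm ℕ) := measurable_subtype_coe
  refine ⟨hval F_meas, hval (C_meas G), ?_, ?_⟩
  · intro h
    exact conj_image_eq _ (fun g hg h' => F_conj_mem G g hg h') h
  · intro h
    exact conj_image_eq _ (fun g hg h' => C_conj_mem G g hg h') h
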